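/- Localization of personalized PageRank (discrete time): let P be an n×n row-stochastic matrix, λ ∈ (0,1), v any probability vector, and π^T = v^T X(λ) with X(λ) = (1−λ)(Id − λP)^{-1}. Then for every node i, min_j (X(λ))_{ji} ≤ π_i ≤ (X(λ))_{ii}. -/
import Mathlib

theorem stmt_8 (n : ℕ) (P : Matrix (Fin n) (Fin n) ℝ)
    (hnonneg : ∀ i j, 0 ≤ P i j) (hrow : ∀ i, ∑ j, P i j = 1)
    (l : ℝ) (hl0 : 0 < l) (hl1 : l < 1)
    (v : Fin n → ℝ) (hv : ∀ i, 0 ≤ v i) (hv1 : ∑ i, v i = 1)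
    (X : Matrix (Fin n) (Fin n) ℝ) (hX : X = (1 - l) • (1 - l • P)⁻¹)
    (π : Fin n → ℝ) (hπ : π = Matrix.vecMul v X) :
    ∀ i : Fin n,
      Finset.univ.inf' ⟨i, Finset.mem_univ i⟩ (fun j => X j i) ≤ π i ∧
      π i ≤ X i i := by
  intro i
  set B : Matrix (Fin n) (Fin n) ℝ := 1 - l • P with hBdef
  set M : Matrix (Fin n) (Fin n) ℝ := B⁻¹ with hMdef
  -- B is invertible
  have hinj : Function.Injective B.mulVec := by
    intro x y hxy
    suffices h : ∀ z : Fin n → ℝ, B.mulVec z = 0 → z = 0 by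
      have := h (x - y) (by rw [Matrix.mulVec_sub, hxy, sub_self])
      have := sub_eq_zero.mp this
      exact this
    intro z hz
    have hz' : ∀ j, z j = l * ∑ k, P j k * z k := by
      intro j
      have h := congrFun hz j
      rw [hBdef] at h
      simp only [Matrix.sub_mulVec, Matrix.smul_mulVec, Pi.sub_apply,
        Pi.smul_apply, Matrix.one_mulVec, smul_eq_mul, Pi.zero_apply] at h
      have h2 : P.mulVec z j = ∑ k, P j k * z k := by
        simp [Matrix.mulVec, dotProduct]
      rw [h2] at h
      linarith
    -- max of |z|
    have hne : (Finset.univ : Finset (Fin n)).Nonempty := ⟨i, Finset.mem_univ i⟩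
    set m := Finset.univ.sup' hne (fun k => |z k|) with hm
    obtain ⟨j, -, hj⟩ := Finset.exists_mem_eq_sup' hne (fun k => |z k|)
    have hmle : ∀ k, |z k| ≤ m := fun k => Finset.le_sup' (fun k => |z k|) (Finset.mem_univ k)
    have hm0 : 0 ≤ m := le_trans (abs_nonneg _) (hmle j)
    have hj' : m = |z j| := hm.trans hj
    have hstep : |z j| ≤ l * m := by
      rw [hz' j, abs_mul, abs_of_pos hl0]
      refine mul_le_mul_of_nonneg_left ?_ hl0.le
      calc |∑ k, P j k * z k| ≤ ∑ k, |P j k * z k| := Finset.abs_sum_le_sum_abs _ _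
        _ ≤ ∑ k, P j k * m := by
            refine Finset.sum_le_sum fun k _ => ?_
            rw [abs_mul, abs_of_nonneg (hnonneg j k)]
            exact mul_le_mul_of_nonneg_left (hmle k) (hnonneg j k)
        _ = m := by rw [← Finset.sum_mul, hrow j, one_mul]
    have : m ≤ l * m := hj'.trans_le hstep
    have hmz : m = 0 := by nlinarith
    funext k
    have h5 := hmle k
    rw [hmz] at h5
    have h0 : |z k| = 0 := le_antisymm h5 (abs_nonneg _)
    simpa using abs_eq_zero.mp h0
  have hunit : IsUnit B.det :=
    (Matrix.isUnit_iff_isUnit_det B).mp (Matrix.mulVec_injective_iff_isUnit.mp hinj)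
  have hBM : B * M = 1 := Matrix.mul_nonsing_inv B hunit
  -- entrywise recursion
  have hent : ∀ j, M j i = (if j = i then (1:ℝ) else 0) + l * ∑ k, P j k * M k i := by
    intro j
    have hMeq : M = 1 + l • (P * M) := by
      have h : M - l • (P * M) = 1 := by
        calc M - l • (P * M) = (1 - l • P) * M := by
              rw [Matrix.sub_mul, Matrix.one_mul, Matrix.smul_mul]
          _ = 1 := hBM
      exact sub_eq_iff_eq_add.mp h
    have := congrFun (congrFun hMeq j) i
    simpa [Matrix.add_apply, Matrix.one_apply, Matrix.mul_apply] using this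
  have hne : (Finset.univ : Finset (Fin n)).Nonempty := ⟨i, Finset.mem_univ i⟩
  -- nonnegativity of column i of M
  have hMnn : ∀ j, 0 ≤ M j i := by
    set m := Finset.univ.inf' hne (fun k => M k i) with hm
    obtain ⟨j₀, -, hj₀⟩ := Finset.exists_mem_eq_inf' hne (fun k => M k i)
    have hj₀' : m = M j₀ i := hm.trans hj₀
    have hmle : ∀ k, m ≤ M k i := fun k => Finset.inf'_le (fun k => M k i) (Finset.mem_univ k)
    have : l * m ≤ m := by
      conv_rhs => rw [hj₀', hent j₀]
      have h1 : l * m = 0 + l * ∑ k, P j₀ k * m := by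
        rw [← Finset.sum_mul, hrow j₀, one_mul, zero_add]
      rw [h1]
      have h2 : ∑ k, P j₀ k * m ≤ ∑ k, P j₀ k * M k i :=
        Finset.sum_le_sum fun k _ => mul_le_mul_of_nonneg_left (hmle k) (hnonneg j₀ k)
      have h3 := mul_le_mul_of_nonneg_left h2 hl0.le
      have hif : (0:ℝ) ≤ if j₀ = i then 1 else 0 := by positivity
      linarith
    have hm0 : 0 ≤ m := by nlinarith
    exact fun j => le_trans hm0 (hmle j)
  -- diagonal dominance of column i of M
  have hMdiag : ∀ j, M j i ≤ M i i := by
    set m := Finset.univ.sup' hne (fun k => M k i) with hm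
    obtain ⟨j₁, -, hj₁⟩ := Finset.exists_mem_eq_sup' hne (fun k => M k i)
    have hj₁' : m = M j₁ i := hm.trans hj₁
    have hlem : ∀ k, M k i ≤ m := fun k => Finset.le_sup' (fun k => M k i) (Finset.mem_univ k)
    intro j
    refine le_trans (hlem j) ?_
    by_cases hji : j₁ = i
    · rw [hj₁', hji]
    · have : m ≤ l * m := by
        have h2 : ∑ k, P j₁ k * M k i ≤ ∑ k, P j₁ k * m :=
          Finset.sum_le_sum fun k _ => mul_le_mul_of_nonneg_left (hlem k) (hnonneg j₁ k)
        have h3 : (∑ k, P j₁ k * m) = m := by rw [← Finset.sum_mul, hrow j₁, one_mul]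
        have h4 := mul_le_mul_of_nonneg_left h2 hl0.le
        rw [h3] at h4
        calc m = (if j₁ = i then (1:ℝ) else 0) + l * ∑ k, P j₁ k * M k i := by
              rw [hj₁']; exact hent j₁
          _ = l * ∑ k, P j₁ k * M k i := by rw [if_neg hji, zero_add]
          _ ≤ l * m := h4
      have : m ≤ 0 := by nlinarith
      exact le_trans this (hMnn i)
  -- now the column of X
  have hXent : ∀ j, X j i = (1 - l) * M j i := by
    intro j; rw [hX]; simp [hMdef, hBdef]
  have hπi : π i = ∑ j, v j * X j i := by
    rw [hπ]; simp [Matrix.vecMul, dotProduct]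
  constructor
  · have hle : ∀ j, Finset.univ.inf' hne (fun j => X j i) ≤ X j i :=
      fun j => Finset.inf'_le _ (Finset.mem_univ j)
    calc Finset.univ.inf' ⟨i, Finset.mem_univ i⟩ (fun j => X j i)
        = ∑ j, v j * Finset.univ.inf' hne (fun j => X j i) := by
          rw [← Finset.sum_mul, hv1, one_mul]
      _ ≤ ∑ j, v j * X j i :=
          Finset.sum_le_sum fun j _ => mul_le_mul_of_nonneg_left (hle j) (hv j)
      _ = π i := hπi.symm
  · calc π i = ∑ j, v j * X j i := hπi
      _ ≤ ∑ j, v j * X i i := by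
          refine Finset.sum_le_sum fun j _ => mul_le_mul_of_nonneg_left ?_ (hv j)
          rw [hXent j, hXent i]
          exact mul_le_mul_of_nonneg_left (hMdiag j) (by linarith)
      _ = X i i := by rw [← Finset.sum_mul, hv1, one_mul]
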